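/- Suppose a(t,x)=(a_ij(t,x)) is continuous, bounded, and symmetric positive definite for all (t,x)∈[0,T̃]×ℝ^d with T̃>T. Let 0≤r<T and let u ∈ C^{1,2}([r,T)×ℝ^d)∩C([r,T]×ℝ^d) satisfy ∂u/∂t + ℒu = 0 on [r,T)×ℝ^d. If there is a constant c≥0 with u(t,x) ≥ −c for all (t,x)∈[r,T]×ℝ^d and u(T,x) ≥ 0 for all x∈ℝ^d, then u(t,x) ≥ 0 for all (t,x)∈[r,T]×ℝ^d. -/

import Mathlib

open Finset Filter Topology Set

noncomputable section

/-- The successor `s'` of `s` in the partition `P` of `[0,T]` (equal to `T` if there is none). -/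
def succOf (T : ℝ) (P : Finset ℝ) (s : ℝ) : ℝ :=
  if h : (P.filter (fun u => s < u)).Nonempty then (P.filter (fun u => s < u)).min' h else T

/-- A refining sequence of partitions of `[0,T]` whose meshes tend to zero. -/
structure PartitionSeq (T : ℝ) where
  part : ℕ → Finset ℝ
  subset_Icc : ∀ n, ↑(part n) ⊆ Set.Icc (0 : ℝ) T
  zero_mem : ∀ n, (0 : ℝ) ∈ part n
  top_mem : ∀ n, T ∈ part n
  refining : ∀ n, part n ⊆ part (n + 1)
  mesh_to_zero : ∀ ε > 0, ∃ N, ∀ n ≥ N, ∀ s ∈ part n, succOf T (part n) s - s < ε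
/-- Approximating sums for the covariation `⟨S_i,S_j⟩(t)` along the `n`-th partition. -/
def covSum (T : ℝ) (𝕋 : PartitionSeq T) {d : ℕ} (S : ℝ → Fin d → ℝ) (i j : Fin d)
    (t : ℝ) (n : ℕ) : ℝ :=
  ∑ s ∈ (𝕋.part n).filter (fun s => s ≤ t),
    (S (succOf T (𝕋.part n) s) i - S s i) * (S (succOf T (𝕋.part n) s) j - S s j)

/-- The Föllmer integral `∫_r^t ξ(s)·dS(s)` exists along `(𝕋_n)` with value `I`. -/
def HasFollmerIntegral (T : ℝ) (𝕋 : PartitionSeq T) {d : ℕ} (ξ S : ℝ → Fin d → ℝ)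
    (r t I : ℝ) : Prop :=
  Tendsto (fun n => ∑ s ∈ (𝕋.part n).filter (fun s => r ≤ s ∧ s ≤ t),
    ∑ k, ξ s k * (S (succOf T (𝕋.part n) s) k - S s k)) atTop (𝓝 I)

/-- The open positive orthant `ℝ_+^d`. -/
def posOrth (d : ℕ) : Set (Fin d → ℝ) := {x | ∀ i, 0 < x i}

/-- The class `𝒮_a`: continuous trajectories whose covariations are `∫_0^t a_ij(s,S(s)) ds`. -/
def SclassA (T : ℝ) (𝕋 : PartitionSeq T) {d : ℕ}
    (a : ℝ → (Fin d → ℝ) → Fin d → Fin d → ℝ) : Set (ℝ → Fin d → ℝ) :=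
  {S | ContinuousOn S (Set.Icc 0 T) ∧
    ∀ i j : Fin d, ∀ t ∈ Set.Icc (0 : ℝ) T,
      Tendsto (fun n => covSum T 𝕋 S i j t n) atTop (𝓝 (∫ s in (0 : ℝ)..t, a s (S s) i j))}

/-- The class `𝒮_a^+`: positive continuous trajectories whose covariations are
`∫_0^t a_ij(s,S(s)) S_i(s) S_j(s) ds`. -/
def SclassAPos (T : ℝ) (𝕋 : PartitionSeq T) {d : ℕ}
    (a : ℝ → (Fin d → ℝ) → Fin d → Fin d → ℝ) : Set (ℝ → Fin d → ℝ) :=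
  {S | ContinuousOn S (Set.Icc 0 T) ∧ (∀ t ∈ Set.Icc (0 : ℝ) T, ∀ i, 0 < S t i) ∧
    ∀ i j : Fin d, ∀ t ∈ Set.Icc (0 : ℝ) T,
      Tendsto (fun n => covSum T 𝕋 S i j t n) atTop
        (𝓝 (∫ s in (0 : ℝ)..t, a s (S s) i j * S s i * S s j))}

/-- First partial derivative in the `i`-th space direction. -/
def pd1 {d : ℕ} (f : (Fin d → ℝ) → ℝ) (i : Fin d) (x : Fin d → ℝ) : ℝ :=
  fderiv ℝ f x (Pi.single i 1)

/-- Second partial derivative in the space directions `i, j`. -/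
def pd2 {d : ℕ} (f : (Fin d → ℝ) → ℝ) (i j : Fin d) (x : Fin d → ℝ) : ℝ :=
  fderiv ℝ (fun y => pd1 f j y) x (Pi.single i 1)

/-- Time derivative (within the time interval `I`). -/
def tderiv {d : ℕ} (I : Set ℝ) (v : ℝ → (Fin d → ℝ) → ℝ) (t : ℝ) (x : Fin d → ℝ) : ℝ :=
  derivWithin (fun τ => v τ x) I t

/-- `v` is of class `C^{1,2}(I × D)`: continuous on `I × D`, continuously differentiable in
`(t,x)` and twice continuously differentiable in `x` on `(int I) × D`, with all derivatives
admitting continuous extensions to `I × D`. -/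
structure IsC12 {d : ℕ} (I : Set ℝ) (D : Set (Fin d → ℝ)) (v : ℝ → (Fin d → ℝ) → ℝ) : Prop where
  cont : ContinuousOn (fun p : ℝ × (Fin d → ℝ) => v p.1 p.2) (I ×ˢ D)
  diff : ∀ t ∈ interior I, ∀ x ∈ D,
    DifferentiableAt ℝ (fun p : ℝ × (Fin d → ℝ) => v p.1 p.2) (t, x)
  diff2 : ∀ t ∈ interior I, ∀ x ∈ D, ∀ j : Fin d, DifferentiableAt ℝ (pd1 (v t) j) x
  derivs_extend : ∃ (gt : ℝ × (Fin d → ℝ) → ℝ) (gx : Fin d → ℝ × (Fin d → ℝ) → ℝ)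
      (gxx : Fin d → Fin d → ℝ × (Fin d → ℝ) → ℝ),
    ContinuousOn gt (I ×ˢ D) ∧ (∀ i, ContinuousOn (gx i) (I ×ˢ D)) ∧
    (∀ i j, ContinuousOn (gxx i j) (I ×ˢ D)) ∧
    ∀ t ∈ interior I, ∀ x ∈ D,
      gt (t, x) = deriv (fun τ => v τ x) t ∧
      (∀ i, gx i (t, x) = pd1 (v t) i x) ∧
      ∀ i j, gxx i j (t, x) = pd2 (v t) i j x


/-- If `φ` has derivative `L` at `t₀` and `t₀` minimizes `φ` on `[t₀, t₀+δ]`, then `0 ≤ L`. -/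
lemma right_min_deriv_nonneg {φ : ℝ → ℝ} {L t₀ δ : ℝ} (hd : HasDerivAt φ L t₀)
    (hδ : 0 < δ) (hmin : ∀ t ∈ Set.Icc t₀ (t₀ + δ), φ t₀ ≤ φ t) : 0 ≤ L := by
  have hslope : Tendsto (slope φ t₀) (𝓝[>] t₀) (𝓝 L) :=
    (hasDerivAt_iff_tendsto_slope.1 hd).mono_left
      (nhdsWithin_mono _ (fun x hx => ne_of_gt hx))
  refine ge_of_tendsto hslope ?_
  filter_upwards [Ioc_mem_nhdsGT_of_mem (c:=t₀) (a:=t₀+δ) (Set.mem_Ico.2 ⟨le_refl t₀, by linarith⟩)] with t ht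
  have h1 : φ t₀ ≤ φ t := hmin t ⟨le_of_lt ht.1, ht.2⟩
  have h2 : 0 < t - t₀ := by linarith [ht.1]
  rw [slope_def_field]
  have : (0:ℝ) ≤ (φ t - φ t₀) / (t - t₀) := div_nonneg (by linarith) (le_of_lt h2)
  simpa [div_eq_inv_mul, sub_div] using this

/-- Second derivative test (necessity): at a local minimum the second derivative is nonneg. -/
lemma second_deriv_nonneg_of_isLocalMin {φ h : ℝ → ℝ} {L : ℝ}
    (hmin : IsLocalMin φ 0) (hφ : ∀ s, HasDerivAt φ (h s) s) (hh : HasDerivAt h L 0) :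
    0 ≤ L := by
  by_contra hL
  push_neg at hL
  have h0 : h 0 = 0 := by
    have := hmin.deriv_eq_zero
    rwa [(hφ 0).deriv] at this
  -- slope of h tends to L < 0
  have hslope : Tendsto (slope h 0) (𝓝[≠] (0:ℝ)) (𝓝 L) := hasDerivAt_iff_tendsto_slope.1 hh
  have hev : ∀ᶠ s in 𝓝[≠] (0:ℝ), slope h 0 s < 0 :=
    hslope.eventually (Filter.Tendsto.eventually_lt_const hL tendsto_id) |>.mono (fun s hs => hs)
  rw [eventually_nhdsWithin_iff] at hev
  obtain ⟨δ1, hδ1, hball⟩ := Metric.eventually_nhds_iff.1 hev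
  obtain ⟨δ2, hδ2, hmin'⟩ := Metric.eventually_nhds_iff.1 (show ∀ᶠ x in 𝓝 (0:ℝ), φ 0 ≤ φ x from hmin)
  set δ := min δ1 δ2 / 2 with hδdef
  have hδpos : 0 < δ := by positivity
  have hneg : ∀ s ∈ interior (Set.Icc (0:ℝ) δ), deriv φ s < 0 := by
    intro s hs
    rw [interior_Icc] at hs
    have hs0 : s ≠ 0 := ne_of_gt hs.1
    have hsd : dist s 0 < δ1 := by
      rw [Real.dist_eq, sub_zero, abs_of_pos hs.1]
      calc s < δ := hs.2
      _ ≤ δ1 := by rw [hδdef]; have := min_le_left δ1 δ2; linarith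
    have := hball hsd hs0
    rw [slope_def_field, h0, sub_zero, sub_zero] at this
    have hhs : h s < 0 := by
      by_contra hc
      push_neg at hc
      exact absurd (div_nonneg hc (le_of_lt hs.1)) (not_le.2 this)
    rw [(hφ s).deriv]; exact hhs
  have hanti : StrictAntiOn φ (Set.Icc 0 δ) :=
    strictAntiOn_of_deriv_neg (convex_Icc 0 δ)
      (fun s _ => (hφ s).continuousAt.continuousWithinAt) hneg
  have : φ δ < φ 0 := hanti (Set.left_mem_Icc.2 (le_of_lt hδpos))
    (Set.right_mem_Icc.2 (le_of_lt hδpos)) hδpos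
  have : φ 0 ≤ φ δ := by
    apply hmin'
    rw [Real.dist_eq, sub_zero, abs_of_pos hδpos]
    have h1 : 0 < min δ1 δ2 := lt_min hδ1 hδ2
    have h2 : min δ1 δ2 ≤ δ2 := min_le_right _ _
    rw [hδdef]; linarith
  linarith


lemma clm_apply_eq_sum {d : ℕ} (F : (Fin d → ℝ) →L[ℝ] ℝ) (v : Fin d → ℝ) :
    F v = ∑ j, v j * F (Pi.single j 1) := by
  have hv : v = ∑ j, (v j) • (Pi.single j (1:ℝ) : Fin d → ℝ) := by
    funext k
    simp [Finset.sum_apply, Pi.single_apply]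
  conv_lhs => rw [hv]
  rw [map_sum]
  simp [smul_eq_mul]

lemma hasFDerivAt_sumsq {d : ℕ} (x : Fin d → ℝ) :
    HasFDerivAt (fun y : Fin d → ℝ => ∑ i, y i ^ 2)
      (∑ i, (2 * x i) • ContinuousLinearMap.proj (R := ℝ) (φ := fun _ : Fin d => ℝ) i) x := by
  have h : ∀ i : Fin d, HasFDerivAt (fun y : Fin d → ℝ => y i ^ 2)
      ((2 * x i) • ContinuousLinearMap.proj (R := ℝ) (φ := fun _ : Fin d => ℝ) i) x := by
    intro i
    have hp : HasFDerivAt (⇑(ContinuousLinearMap.proj (R := ℝ) (φ := fun _ : Fin d => ℝ) i))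
        (ContinuousLinearMap.proj (R := ℝ) (φ := fun _ : Fin d => ℝ) i) x :=
      ContinuousLinearMap.hasFDerivAt _
    have h2 := hp.mul hp
    have heq : ((2 * x i) • ContinuousLinearMap.proj (R := ℝ) (φ := fun _ : Fin d => ℝ) i)
        = (ContinuousLinearMap.proj (R := ℝ) (φ := fun _ : Fin d => ℝ) i) x •
            ContinuousLinearMap.proj (R := ℝ) (φ := fun _ : Fin d => ℝ) i +
          (ContinuousLinearMap.proj (R := ℝ) (φ := fun _ : Fin d => ℝ) i) x •
            ContinuousLinearMap.proj (R := ℝ) (φ := fun _ : Fin d => ℝ) i := by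
      simp [two_mul, add_smul]
    rw [heq]
    have : (fun y : Fin d → ℝ => y i ^ 2)
        = fun y => (ContinuousLinearMap.proj (R := ℝ) (φ := fun _ : Fin d => ℝ) i) y *
            (ContinuousLinearMap.proj (R := ℝ) (φ := fun _ : Fin d => ℝ) i) y := by
      funext y; simp [pow_two]
    rw [this]
    exact h2
  have hs := HasFDerivAt.fun_sum (fun i (_ : i ∈ Finset.univ) => h i)
  convert hs using 1

lemma psd_decomp {d : ℕ} (A : Matrix (Fin d) (Fin d) ℝ) (hsymm : ∀ i j, A i j = A j i)
    (hpd : ∀ y : Fin d → ℝ, y ≠ 0 → 0 < ∑ i, ∑ j, A i j * y i * y j) :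
    ∃ B : Matrix (Fin d) (Fin d) ℝ, ∀ i j, A i j = ∑ k, B k i * B k j := by
  have hA : A.PosSemidef := by
    refine Matrix.PosSemidef.of_dotProduct_mulVec_nonneg ?_ ?_
    · ext i j
      simp [Matrix.conjTranspose_apply, hsymm j i]
    · intro y
      rcases eq_or_ne y 0 with rfl | hy
      · simp
      · have hlt := hpd y hy
        have heq : dotProduct (star y) (A.mulVec y)
            = ∑ i, ∑ j, A i j * y i * y j := by
          simp only [dotProduct, Matrix.mulVec, Pi.star_apply, star_trivial,
            Finset.mul_sum]
          exact Finset.sum_congr rfl fun i _ => Finset.sum_congr rfl fun j _ => by ring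
        rw [heq]
        exact le_of_lt hlt
  obtain ⟨B, hB⟩ : ∃ B : Matrix (Fin d) (Fin d) ℝ, A = B.conjTranspose * B := by
    open scoped MatrixOrder in
    exact ⟨CFC.sqrt A, by
      have hA0 : 0 ≤ A := Matrix.nonneg_iff_posSemidef.2 hA
      rw [← Matrix.star_eq_conjTranspose,
        (CFC.sqrt_nonneg A).isSelfAdjoint.star_eq, CFC.sqrt_mul_sqrt_self A hA0]⟩
  refine ⟨B, fun i j => ?_⟩
  have := congrArg (fun M => M i j) hB
  simpa [Matrix.mul_apply, Matrix.conjTranspose_apply] using this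

set_option maxHeartbeats 2000000 in
lemma key_lemma (T Ttil : ℝ) (hTt : T < Ttil) (d : ℕ)
    (a : ℝ → (Fin d → ℝ) → Fin d → Fin d → ℝ) (Cb : ℝ)
    (hCb : ∀ t ∈ Set.Icc (0 : ℝ) Ttil, ∀ x : Fin d → ℝ, ∀ i j, |a t x i j| ≤ Cb)
    (ha_symm : ∀ t ∈ Set.Icc (0 : ℝ) Ttil, ∀ x : Fin d → ℝ, ∀ i j, a t x i j = a t x j i)
    (ha_pd : ∀ t ∈ Set.Icc (0 : ℝ) Ttil, ∀ x : Fin d → ℝ, ∀ y : Fin d → ℝ, y ≠ 0 →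
      0 < ∑ i, ∑ j, a t x i j * y i * y j)
    (r : ℝ) (hr : 0 ≤ r) (hrT : r < T)
    (u : ℝ → (Fin d → ℝ) → ℝ)
    (hu_cont : ContinuousOn (fun q : ℝ × (Fin d → ℝ) => u q.1 q.2)
      (Set.Icc r T ×ˢ (Set.univ : Set (Fin d → ℝ))))
    (hu_C12 : IsC12 (Set.Ico r T) (Set.univ : Set (Fin d → ℝ)) u)
    (hu_pde : ∀ t ∈ Set.Ico r T, ∀ x : Fin d → ℝ,
      tderiv (Set.Icc r T) u t x + (1 / 2) * ∑ i, ∑ j, a t x i j * pd2 (u t) i j x = 0)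
    (c : ℝ)
    (hu_lb : ∀ t ∈ Set.Icc r T, ∀ x : Fin d → ℝ, -c ≤ u t x)
    (hu_term : ∀ x : Fin d → ℝ, 0 ≤ u T x)
    (r' ε : ℝ) (hr' : r < r') (hr'T : r' ≤ T) (hε : 0 < ε) :
    ∀ t ∈ Set.Icc r' T, ∀ x : Fin d → ℝ,
      0 ≤ u t x + ε * ((1 + ∑ i, x i ^ 2) * Real.exp ((d * |Cb| + 1) * (T - t))) := by
  set lam : ℝ := d * |Cb| + 1 with hlam
  have hlam_pos : 0 < lam := by positivity
  set q : (Fin d → ℝ) → ℝ := fun x => ∑ i, x i ^ 2 with hqdef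
  set E : ℝ → ℝ := fun t => Real.exp (lam * (T - t)) with hEdef
  set w : ℝ → (Fin d → ℝ) → ℝ := fun t x => u t x + ε * ((1 + q x) * E t) with hwdef
  have hq0 : ∀ x, 0 ≤ q x := fun x => Finset.sum_nonneg fun i _ => sq_nonneg _
  have hEpos : ∀ t, 0 < E t := fun t => Real.exp_pos _
  have hE1 : ∀ t ≤ T, 1 ≤ E t := fun t ht =>
    Real.one_le_exp (by nlinarith)
  -- lower bound for w
  have hwlb : ∀ t ∈ Set.Icc r T, ∀ x, -c + ε * q x ≤ w t x := by
    intro t ht x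
    have h1 : -c ≤ u t x := hu_lb t ht x
    have h2 : 1 ≤ E t := hE1 t ht.2
    have h3 : 0 ≤ q x := hq0 x
    have h4 : q x ≤ (1 + q x) * E t := by nlinarith
    have : ε * q x ≤ ε * ((1 + q x) * E t) := mul_le_mul_of_nonneg_left h4 (le_of_lt hε)
    simp only [hwdef]
    linarith
  by_contra hcon
  push_neg at hcon
  obtain ⟨t₁, ht₁, x₁, hx₁⟩ := hcon
  change w t₁ x₁ < 0 at hx₁
  set R2 : ℝ := (c + 1) / ε with hR2
  have hR2e : ε * R2 = c + 1 := by rw [hR2]; field_simp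
  -- the compact set K
  have hqcont : Continuous q := by
    apply continuous_finset_sum
    exact fun i _ => (continuous_apply i).pow 2
  set Kx : Set (Fin d → ℝ) := {x | q x ≤ R2} with hKx
  set K : Set (ℝ × (Fin d → ℝ)) := Set.Icc r' T ×ˢ Kx with hKdef
  have hKxcomp : IsCompact Kx := by
    refine IsCompact.of_isClosed_subset (isCompact_closedBall (0 : Fin d → ℝ) (Real.sqrt R2))
      (isClosed_le hqcont continuous_const) ?_
    intro x hx
    rw [Metric.mem_closedBall, dist_zero_right]
    rw [pi_norm_le_iff_of_nonneg (Real.sqrt_nonneg _)]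
    intro i
    have : x i ^ 2 ≤ q x := Finset.single_le_sum (fun j (_ : j ∈ Finset.univ) => sq_nonneg (x j))
      (Finset.mem_univ i)
    have := Real.abs_le_sqrt (le_trans this hx)
    simpa using this
  have hKcomp : IsCompact K := isCompact_Icc.prod hKxcomp
  have hKsub : K ⊆ Set.Icc r T ×ˢ (Set.univ : Set (Fin d → ℝ)) := by
    rintro ⟨t, x⟩ ⟨ht, hx⟩
    exact ⟨⟨le_trans (le_of_lt hr') ht.1, ht.2⟩, trivial⟩
  have hwcont : ContinuousOn (fun p : ℝ × (Fin d → ℝ) => w p.1 p.2) K := by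
    apply ContinuousOn.add (hu_cont.mono hKsub)
    apply Continuous.continuousOn
    apply Continuous.mul continuous_const
    apply Continuous.mul
    · exact continuous_const.add (hqcont.comp continuous_snd)
    · exact (Real.continuous_exp.comp (continuous_const.mul (continuous_const.sub continuous_fst)))
  have hx₁K : x₁ ∈ Kx := by
    have := hwlb t₁ ⟨le_trans (le_of_lt hr') ht₁.1, ht₁.2⟩ x₁
    have hq1 : ε * q x₁ < c + 1 := by linarith
    rw [hKx, Set.mem_setOf_eq, hR2, le_div_iff₀ hε]
    linarith
  have hKne : K.Nonempty := ⟨(t₁, x₁), ⟨ht₁, hx₁K⟩⟩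
  obtain ⟨⟨t₀, x₀⟩, hK₀, hmin₀⟩ := hKcomp.exists_isMinOn hKne hwcont
  rw [isMinOn_iff] at hmin₀
  have hw₀neg : w t₀ x₀ < 0 := lt_of_le_of_lt (hmin₀ (t₁, x₁) ⟨ht₁, hx₁K⟩) hx₁
  have ht₀mem : t₀ ∈ Set.Icc r' T := hK₀.1
  have hx₀mem : x₀ ∈ Kx := hK₀.2
  have ht₀T : t₀ < T := by
    rcases lt_or_eq_of_le ht₀mem.2 with h | h
    · exact h
    · exfalso
      have h1 : 0 ≤ u T x₀ := hu_term x₀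
      have h2 : 0 < ε * ((1 + q x₀) * E T) := by
        have := hq0 x₀; have := hEpos T; positivity
      rw [hwdef] at hw₀neg
      simp only at hw₀neg
      rw [h] at hw₀neg
      linarith
  have hqx₀ : q x₀ < R2 := by
    have := hwlb t₀ ⟨le_trans (le_of_lt hr') ht₀mem.1, ht₀mem.2⟩ x₀
    have : ε * q x₀ < c + 1 := by linarith
    rw [hR2, lt_div_iff₀ hε]
    linarith
  have ht₀I : t₀ ∈ interior (Set.Ico r T) := by
    rw [interior_Ico]
    exact ⟨lt_of_lt_of_le hr' ht₀mem.1, ht₀T⟩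
  have ht₀Icc : t₀ ∈ Set.Icc (0:ℝ) Ttil :=
    ⟨le_trans hr (le_trans (le_of_lt hr') ht₀mem.1), le_trans ht₀mem.2 (le_of_lt hTt)⟩
  -- joint differentiability of u at (t₀, x₀)
  have hdiff₀ : DifferentiableAt ℝ (fun p : ℝ × (Fin d → ℝ) => u p.1 p.2) (t₀, x₀) :=
    hu_C12.diff t₀ ht₀I x₀ trivial
  set F : ℝ × (Fin d → ℝ) →L[ℝ] ℝ := fderiv ℝ (fun p : ℝ × (Fin d → ℝ) => u p.1 p.2) (t₀, x₀)
    with hF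
  -- time derivative of u at (t₀, x₀)
  have hpath : HasDerivAt (fun t : ℝ => ((t, x₀) : ℝ × (Fin d → ℝ))) (1, 0) t₀ :=
    (hasDerivAt_id t₀).prodMk (hasDerivAt_const t₀ x₀)
  have hut : HasDerivAt (fun t => u t x₀) (F (1, 0)) t₀ := by
    have := hdiff₀.hasFDerivAt.comp_hasDerivAt t₀ hpath
    exact this
  have htd : tderiv (Set.Icc r T) u t₀ x₀ = F (1, 0) := by
    have hU : UniqueDiffWithinAt ℝ (Set.Icc r T) t₀ :=
      uniqueDiffOn_Icc hrT t₀ ⟨le_trans (le_of_lt hr') ht₀mem.1, ht₀mem.2⟩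
    exact (hut.hasDerivWithinAt).derivWithin hU
  -- time derivative of ψ at t₀ (with x₀ fixed)
  have hψt : HasDerivAt (fun t => (1 + q x₀) * E t) (-((1 + q x₀) * (E t₀ * lam))) t₀ := by
    have h1 : HasDerivAt (fun t : ℝ => lam * (T - t)) (lam * (-1)) t₀ :=
      ((hasDerivAt_id t₀).const_sub T).const_mul lam
    have h2 := h1.exp
    have h3 := h2.const_mul (1 + q x₀)
    refine h3.congr_deriv ?_
    simp only [hEdef]
    ring
  have hwt : HasDerivAt (fun t => w t x₀)
      (F (1, 0) + ε * (-((1 + q x₀) * (E t₀ * lam)))) t₀ := by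
    have := hut.add ((hψt.const_mul ε))
    exact this
  -- minimality in time on the right
  have h1 : 0 ≤ F (1, 0) + ε * (-((1 + q x₀) * (E t₀ * lam))) := by
    refine right_min_deriv_nonneg hwt (show (0:ℝ) < T - t₀ by linarith) ?_
    intro t ht
    have htT : t ∈ Set.Icc t₀ T := by
      constructor
      · exact ht.1
      · have := ht.2; linarith
    exact hmin₀ (t, x₀) ⟨⟨le_trans ht₀mem.1 htT.1, htT.2⟩, hx₀mem⟩
  -- spatial part
  set f : (Fin d → ℝ) → ℝ := fun y => w t₀ y with hfdef
  have hux : ∀ x : Fin d → ℝ, DifferentiableAt ℝ (u t₀) x := by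
    intro x
    have hd := hu_C12.diff t₀ ht₀I x trivial
    have hp : DifferentiableAt ℝ (fun y : Fin d → ℝ => ((t₀, y) : ℝ × (Fin d → ℝ))) x :=
      DifferentiableAt.prodMk (differentiableAt_const t₀) differentiableAt_id
    exact hd.comp x hp
  set Dψ : (Fin d → ℝ) → ((Fin d → ℝ) →L[ℝ] ℝ) := fun x =>
    (E t₀) • (∑ i, (2 * x i) • ContinuousLinearMap.proj (R := ℝ) (φ := fun _ : Fin d => ℝ) i)
    with hDψ
  have hψx : ∀ x, HasFDerivAt (fun y => (1 + q y) * E t₀) (Dψ x) x := by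
    intro x
    have h1 := (hasFDerivAt_sumsq x).const_add 1
    have h2 := h1.mul_const (E t₀)
    convert h2 using 1
  have hDψ_single : ∀ x, ∀ j, Dψ x (Pi.single j 1) = E t₀ * (2 * x j) := by
    intro x j
    rw [hDψ]
    simp only [ContinuousLinearMap.smul_apply, ContinuousLinearMap.coe_sum',
      Finset.sum_apply, ContinuousLinearMap.proj_apply, smul_eq_mul, Pi.single_apply]
    simp only [mul_ite, mul_one, mul_zero, Finset.sum_ite_eq', Finset.mem_univ, if_true]
  have hfd : ∀ x, DifferentiableAt ℝ f x := by
    intro x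
    exact (hux x).add (((hψx x).differentiableAt).const_mul ε)
  have hpd1 : ∀ j x, pd1 f j x = pd1 (u t₀) j x + (ε * (E t₀ * 2)) * x j := by
    intro j x
    show (fderiv ℝ f x) (Pi.single j 1) = _
    have heq : fderiv ℝ f x = fderiv ℝ (u t₀) x + ε • (Dψ x) := by
      rw [hfdef]
      have : (fun y => w t₀ y) = fun y => u t₀ y + ε * ((1 + q y) * E t₀) := rfl
      rw [this, fderiv_fun_add (hux x) (((hψx x).differentiableAt).const_mul ε),
        fderiv_const_mul ((hψx x).differentiableAt) ε, (hψx x).fderiv]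
    rw [heq]
    simp only [ContinuousLinearMap.add_apply, ContinuousLinearMap.smul_apply, smul_eq_mul]
    rw [hDψ_single]
    show pd1 (u t₀) j x + _ = pd1 (u t₀) j x + _
    ring
  have hpd1fun : ∀ j, (pd1 f j) = fun x => pd1 (u t₀) j x + (ε * (E t₀ * 2)) * x j :=
    fun j => funext (hpd1 j)
  -- differentiability of pd1 f j and its derivative
  have hlinj : ∀ j x, HasFDerivAt (fun y : Fin d → ℝ => (ε * (E t₀ * 2)) * y j)
      ((ε * (E t₀ * 2)) • ContinuousLinearMap.proj (R := ℝ) (φ := fun _ : Fin d => ℝ) j) x := by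
    intro j x
    exact (ContinuousLinearMap.proj (R := ℝ) (φ := fun _ : Fin d => ℝ) j).hasFDerivAt.const_mul _
  have hpdiff : ∀ j x, DifferentiableAt ℝ (pd1 f j) x := by
    intro j x
    rw [hpd1fun j]
    exact (hu_C12.diff2 t₀ ht₀I x trivial j).add (hlinj j x).differentiableAt
  -- the second derivative matrix M
  set M : Fin d → Fin d → ℝ := fun i j => pd2 f i j x₀ with hMdef
  have hM : ∀ i j, M i j = pd2 (u t₀) i j x₀
      + (ε * (E t₀ * 2)) * (if i = j then 1 else 0) := by
    intro i j
    show (fderiv ℝ (fun y => pd1 f j y) x₀) (Pi.single i 1) = _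
    have heq : (fun y => pd1 f j y) = fun y => pd1 (u t₀) j y + (ε * (E t₀ * 2)) * y j := by
      funext y; exact hpd1 j y
    rw [heq, fderiv_fun_add (hu_C12.diff2 t₀ ht₀I x₀ trivial j) (hlinj j x₀).differentiableAt,
      (hlinj j x₀).fderiv]
    simp only [ContinuousLinearMap.add_apply, ContinuousLinearMap.smul_apply,
      ContinuousLinearMap.proj_apply, smul_eq_mul, Pi.single_apply]
    show pd2 (u t₀) i j x₀ + _ = pd2 (u t₀) i j x₀ + _
    congr 1
    by_cases h : i = j
    · subst h; simp
    · have : ¬ (j = i) := fun hh => h hh.symm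
      simp [h, this]
  -- directional second derivative nonneg at spatial local min
  have hU : IsOpen {x : Fin d → ℝ | q x < R2} := isOpen_lt hqcont continuous_const
  have hlocmin : IsLocalMin f x₀ := by
    refine Filter.eventually_of_mem (hU.mem_nhds hqx₀) (fun x hx => ?_)
    exact hmin₀ (t₀, x) ⟨⟨ht₀mem.1, ht₀mem.2⟩, le_of_lt (show q x < R2 from hx)⟩
  have hQv : ∀ v : Fin d → ℝ, 0 ≤ ∑ j, v j * ∑ i, v i * M i j := by
    intro v
    set γ : ℝ → (Fin d → ℝ) := fun s => x₀ + s • v with hγdef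
    have hγ : ∀ s, HasDerivAt γ v s := by
      intro s
      have := ((hasDerivAt_id s).smul_const v).const_add x₀
      simpa [hγdef] using this
    have hγ0 : γ 0 = x₀ := by simp [hγdef]
    have hφv : ∀ s, HasDerivAt (fun s => f (γ s))
        (∑ j, v j * pd1 f j (γ s)) s := by
      intro s
      have h := ((hfd (γ s)).hasFDerivAt).comp_hasDerivAt s (hγ s)
      have heq : (fderiv ℝ f (γ s)) v = ∑ j, v j * pd1 f j (γ s) :=
        clm_apply_eq_sum _ v
      rw [heq] at h
      exact h
    have hhv : HasDerivAt (fun s => ∑ j, v j * pd1 f j (γ s))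
        (∑ j, v j * ∑ i, v i * M i j) 0 := by
      apply HasDerivAt.fun_sum
      intro j _
      have hD : HasFDerivAt (pd1 f j) (fderiv ℝ (pd1 f j) x₀) (γ 0) := by
        rw [hγ0]; exact (hpdiff j x₀).hasFDerivAt
      have h := hD.comp_hasDerivAt 0 (hγ 0)
      have heq : (fderiv ℝ (pd1 f j) x₀) v = ∑ i, v i * M i j :=
        clm_apply_eq_sum _ v
      rw [heq] at h
      exact h.const_mul (v j)
    have hφmin : IsLocalMin (fun s => f (γ s)) 0 := by
      have hct : Tendsto γ (𝓝 0) (𝓝 x₀) := by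
        have := (hγ 0).continuousAt
        rwa [ContinuousAt, hγ0] at this
      have hev := hct.eventually hlocmin
      refine hev.mono (fun s hs => ?_)
      show f (γ 0) ≤ f (γ s)
      rw [hγ0]; exact hs
    exact second_deriv_nonneg_of_isLocalMin hφmin hφv hhv
  -- PSD decomposition of a(t₀,x₀)
  obtain ⟨B, hB⟩ := psd_decomp (Matrix.of fun i j => a t₀ x₀ i j)
    (fun i j => ha_symm t₀ ht₀Icc x₀ i j) (fun y hy => ha_pd t₀ ht₀Icc x₀ y hy)
  have hBa : ∀ i j, a t₀ x₀ i j = ∑ k, B k i * B k j := hB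
  have hS : 0 ≤ ∑ i, ∑ j, a t₀ x₀ i j * M i j := by
    have hrw : (∑ i, ∑ j, a t₀ x₀ i j * M i j)
        = ∑ k, ∑ j, (B k j) * ∑ i, (B k i) * M i j := by
      simp_rw [hBa, Finset.sum_mul, Finset.mul_sum]
      calc (∑ i, ∑ j, ∑ k, B k i * B k j * M i j)
          = ∑ i, ∑ k, ∑ j, B k i * B k j * M i j :=
            Finset.sum_congr rfl fun i _ => Finset.sum_comm
        _ = ∑ k, ∑ i, ∑ j, B k i * B k j * M i j := Finset.sum_comm
        _ = ∑ k, ∑ j, ∑ i, B k i * B k j * M i j :=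
            Finset.sum_congr rfl fun k _ => Finset.sum_comm
        _ = ∑ k, ∑ j, ∑ i, B k j * (B k i * M i j) :=
            Finset.sum_congr rfl fun k _ => Finset.sum_congr rfl fun j _ =>
              Finset.sum_congr rfl fun i _ => by ring
    rw [hrw]
    exact Finset.sum_nonneg fun k _ => hQv (fun i => B k i)
  -- split the sum
  have hsplit : ∑ i, ∑ j, a t₀ x₀ i j * M i j
      = (∑ i, ∑ j, a t₀ x₀ i j * pd2 (u t₀) i j x₀)
        + (ε * (E t₀ * 2)) * ∑ i, a t₀ x₀ i i := by
    simp_rw [hM, mul_add, Finset.sum_add_distrib]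
    congr 1
    rw [Finset.mul_sum]
    refine Finset.sum_congr rfl fun i _ => ?_
    rw [Finset.sum_eq_single i]
    · simp; ring
    · intro j _ hji
      have : ¬ (i = j) := fun h => hji h.symm
      simp [this]
    · intro h; exact absurd (Finset.mem_univ i) h
  -- the PDE at (t₀, x₀)
  have hpde := hu_pde t₀ ⟨le_trans (le_of_lt hr') ht₀mem.1, ht₀T⟩ x₀
  rw [htd] at hpde
  -- trace bound
  have htr : ∑ i, a t₀ x₀ i i ≤ d * |Cb| := by
    calc ∑ i, a t₀ x₀ i i ≤ ∑ _i : Fin d, |Cb| := by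
          refine Finset.sum_le_sum fun i _ => ?_
          exact le_trans (le_abs_self _) (le_trans (hCb t₀ ht₀Icc x₀ i i) (le_abs_self Cb))
      _ = d * |Cb| := by simp [Finset.sum_const, Finset.card_univ, nsmul_eq_mul]
  -- contradiction
  have hεE : 0 < ε * E t₀ := mul_pos hε (hEpos t₀)
  rw [hsplit] at hS
  have hkey : ∑ i, ∑ j, a t₀ x₀ i j * pd2 (u t₀) i j x₀ = -2 * F (1, 0) := by linarith
  rw [hkey] at hS
  -- 0 ≤ -2 F(1,0) + 2 ε E trA;  0 ≤ F(1,0) - ε (1+q) E lam;  trA ≤ d|Cb| < lam ≤ lam(1+q)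
  have hq0' : 0 ≤ q x₀ := hq0 x₀
  have h2 : ε * (E t₀ * 2) * (∑ i, a t₀ x₀ i i) ≤ ε * (E t₀ * 2) * (d * |Cb|) :=
    mul_le_mul_of_nonneg_left htr (by positivity)
  have h3 : ε * (E t₀ * lam) ≤ ε * ((1 + q x₀) * (E t₀ * lam)) := by
    have hstep : (E t₀ * lam) ≤ (1 + q x₀) * (E t₀ * lam) := by
      nlinarith [mul_nonneg (hq0 x₀) (le_of_lt (mul_pos (hEpos t₀) hlam_pos))]
    exact mul_le_mul_of_nonneg_left hstep (le_of_lt hε)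
  have h4 : ε * (E t₀ * lam) = ε * (E t₀ * ((d:ℝ) * |Cb|)) + ε * E t₀ := by rw [hlam]; ring
  have h5 : ε * (E t₀ * 2) * ((d:ℝ) * |Cb|) = 2 * (ε * (E t₀ * ((d:ℝ) * |Cb|))) := by ring
  rw [mul_neg] at h1
  linarith


/-- The parabolic minimum principle used in the proof of Theorem 3.3: a solution of
`∂u/∂t + ℒu = 0` on `[r,T) × ℝ^d` that is bounded below and nonnegative at the terminal time
is nonnegative everywhere. -/

theorem stmt16 (T Ttil : ℝ) (hT : 0 < T) (hTt : T < Ttil) (d : ℕ)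
    (a : ℝ → (Fin d → ℝ) → Fin d → Fin d → ℝ)
    (ha_cont : ∀ i j, ContinuousOn (fun p : ℝ × (Fin d → ℝ) => a p.1 p.2 i j)
      (Set.Icc 0 Ttil ×ˢ (Set.univ : Set (Fin d → ℝ))))
    (ha_bdd : ∃ Cb : ℝ, ∀ t ∈ Set.Icc (0 : ℝ) Ttil, ∀ x : Fin d → ℝ, ∀ i j,
      |a t x i j| ≤ Cb)
    (ha_symm : ∀ t ∈ Set.Icc (0 : ℝ) Ttil, ∀ x : Fin d → ℝ, ∀ i j, a t x i j = a t x j i)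
    (ha_pd : ∀ t ∈ Set.Icc (0 : ℝ) Ttil, ∀ x : Fin d → ℝ, ∀ y : Fin d → ℝ, y ≠ 0 →
      0 < ∑ i, ∑ j, a t x i j * y i * y j)
    (r : ℝ) (hr : 0 ≤ r) (hrT : r < T)
    (u : ℝ → (Fin d → ℝ) → ℝ)
    (hu_cont : ContinuousOn (fun q : ℝ × (Fin d → ℝ) => u q.1 q.2)
      (Set.Icc r T ×ˢ (Set.univ : Set (Fin d → ℝ))))
    (hu_C12 : IsC12 (Set.Ico r T) (Set.univ : Set (Fin d → ℝ)) u)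
    (hu_pde : ∀ t ∈ Set.Ico r T, ∀ x : Fin d → ℝ,
      tderiv (Set.Icc r T) u t x + (1 / 2) * ∑ i, ∑ j, a t x i j * pd2 (u t) i j x = 0)
    (c : ℝ) (hc : 0 ≤ c)
    (hu_lb : ∀ t ∈ Set.Icc r T, ∀ x : Fin d → ℝ, -c ≤ u t x)
    (hu_term : ∀ x : Fin d → ℝ, 0 ≤ u T x) :
    ∀ t ∈ Set.Icc r T, ∀ x : Fin d → ℝ, 0 ≤ u t x := by
  obtain ⟨Cb, hCb⟩ := ha_bdd
  have hIoc : ∀ s ∈ Set.Ioc r T, ∀ x : Fin d → ℝ, 0 ≤ u s x := by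
    intro s hs x
    rcases eq_or_lt_of_le hs.2 with hT' | hsT
    · rw [hT']; exact hu_term x
    · have hkeyapp : ∀ ε > (0:ℝ), 0 ≤ u s x
          + ε * ((1 + ∑ i, x i ^ 2) * Real.exp ((d * |Cb| + 1) * (T - s))) :=
        fun ε hε => key_lemma T Ttil hTt d a Cb hCb ha_symm ha_pd r hr hrT u hu_cont hu_C12
          hu_pde c hu_lb hu_term s ε hs.1 (le_of_lt hsT) hε s ⟨le_refl s, le_of_lt hsT⟩ x
      set C := (1 + ∑ i, x i ^ 2) * Real.exp ((d * |Cb| + 1) * (T - s)) with hC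
      have hq0 : (0:ℝ) ≤ ∑ i, x i ^ 2 := Finset.sum_nonneg fun i _ => sq_nonneg _
      have hCpos : 0 < C := by
        rw [hC]
        exact mul_pos (by linarith) (Real.exp_pos _)
      by_contra hneg
      push_neg at hneg
      have happ := hkeyapp (-(u s x) / (2 * C)) (div_pos (by linarith) (by linarith))
      have hC0 : C ≠ 0 := ne_of_gt hCpos
      have hmul : (-(u s x) / (2 * C)) * C = -(u s x) / 2 := by
        field_simp
      rw [hmul] at happ
      linarith
  intro t ht x
  rcases eq_or_lt_of_le ht.1 with hreq | hrt
  · have hne : (𝓝[Set.Ioc r T] r).NeBot := by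
      rw [← mem_closure_iff_nhdsWithin_neBot, closure_Ioc (ne_of_lt hrT)]
      exact ⟨le_refl r, le_of_lt hrT⟩
    have hmap : Tendsto (fun s => ((s, x) : ℝ × (Fin d → ℝ)))
        (𝓝[Set.Ioc r T] r) (𝓝[Set.Icc r T ×ˢ (Set.univ : Set (Fin d → ℝ))] (r, x)) := by
      apply ContinuousWithinAt.tendsto_nhdsWithin
      · exact (continuous_id.prodMk continuous_const).continuousWithinAt
      · exact fun s hs => ⟨⟨le_of_lt hs.1, hs.2⟩, trivial⟩
    have hcw := hu_cont (r, x) ⟨⟨le_refl r, le_of_lt hrT⟩, trivial⟩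
    have htend : Tendsto (fun s => u s x) (𝓝[Set.Ioc r T] r) (𝓝 (u r x)) :=
      hcw.tendsto.comp hmap
    have hge := ge_of_tendsto htend
      (Filter.eventually_of_mem self_mem_nhdsWithin fun s hs => hIoc s hs x)
    rw [← hreq]
    exact hge
  · exact hIoc t ⟨hrt, ht.2⟩ x
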